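/- arXiv:2208.02393 — 3 statements merged into one kernel-verified Lean document; each statement's English description precedes it below -/
import Mathlib

section
/- Let A(t) be a differentiable m×n matrix-valued function with constant rank, P(t) = I - A(t)⁺A(t), and L = -A⁺ Ȧ P. Then the time derivative of the projection satisfies Ṗ = L + Lᵀ. -/
open Matrix

attribute [local instance] Matrix.normedAddCommGroup Matrix.normedSpace

def IsMoorePenrose {m n : ℕ} (A : Matrix (Fin m) (Fin n) ℝ)
    (Ap : Matrix (Fin n) (Fin m) ℝ) : Prop :=
  A * Ap * A = A ∧ Ap * A * Ap = Ap ∧ (A * Ap)ᵀ = A * Ap ∧ (Ap * A)ᵀ = Ap * A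

theorem hasDerivAt_matrix {a b : ℕ} {f : ℝ → Matrix (Fin a) (Fin b) ℝ}
    {f' : Matrix (Fin a) (Fin b) ℝ} {t : ℝ} :
    HasDerivAt f f' t ↔ ∀ i j, HasDerivAt (fun s => f s i j) (f' i j) t := by
  refine hasDerivAt_pi.trans ?_
  exact forall_congr' fun i => hasDerivAt_pi

theorem HasDerivAt.matmul {a b c : ℕ} {f : ℝ → Matrix (Fin a) (Fin b) ℝ}
    {g : ℝ → Matrix (Fin b) (Fin c) ℝ} {f' g'} {t : ℝ}
    (hf : HasDerivAt f f' t) (hg : HasDerivAt g g' t) :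
    HasDerivAt (fun s => f s * g s) (f' * g t + f t * g') t := by
  rw [hasDerivAt_matrix] at hf hg ⊢
  intro i j
  simp only [Matrix.mul_apply, Matrix.add_apply]
  have : HasDerivAt (fun s => ∑ k, f s i k * g s k j)
      (∑ k, (f' i k * g t k j + f t i k * g' k j)) t :=
    HasDerivAt.fun_sum fun k _ => (hf i k).mul (hg k j)
  simpa [Finset.sum_add_distrib] using this

theorem HasDerivAt.matrix_transpose {a b : ℕ} {f : ℝ → Matrix (Fin a) (Fin b) ℝ}
    {f'} {t : ℝ} (hf : HasDerivAt f f' t) :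
    HasDerivAt (fun s => (f s)ᵀ) f'ᵀ t := by
  rw [hasDerivAt_matrix] at hf ⊢
  exact fun i j => hf j i

/-- For a differentiable constant-rank matrix function A(t), with P = I - A⁺A and
L = -A⁺ Ȧ P, the derivative of the projection satisfies Ṗ = L + Lᵀ. -/
theorem stmt5 {m n : ℕ} (A A' : ℝ → Matrix (Fin m) (Fin n) ℝ)
    (Ap : ℝ → Matrix (Fin n) (Fin m) ℝ) (r : ℕ)
    (hrank : ∀ t, (A t).rank = r)
    (hMP : ∀ t, IsMoorePenrose (A t) (Ap t))
    (hA : ∀ t, HasDerivAt A (A' t) t)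
    (hApDiff : Differentiable ℝ Ap)
    (P : ℝ → Matrix (Fin n) (Fin n) ℝ)
    (hP : ∀ t, P t = 1 - Ap t * A t)
    (t : ℝ) :
    HasDerivAt P ((-(Ap t * A' t * P t)) + (-(Ap t * A' t * P t))ᵀ) t := by
  set Ap' : Matrix (Fin n) (Fin m) ℝ := deriv Ap t with hAp'
  set D : Matrix (Fin n) (Fin n) ℝ := Ap' * A t + Ap t * A' t with hD
  have hQ : HasDerivAt (fun s => Ap s * A s) D t :=
    ((hApDiff t).hasDerivAt).matmul (hA t)
  -- D = D*Q + Q*D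
  have hQQ : HasDerivAt (fun s => Ap s * A s)
      (D * (Ap t * A t) + (Ap t * A t) * D) t := by
    have h2 := hQ.matmul hQ
    have he : (fun s => (Ap s * A s) * (Ap s * A s)) = fun s => Ap s * A s := by
      funext s
      calc (Ap s * A s) * (Ap s * A s) = (Ap s * A s * Ap s) * A s := by
            simp only [Matrix.mul_assoc]
        _ = Ap s * A s := by rw [(hMP s).2.1]
    rwa [he] at h2
  have hDD : D = D * (Ap t * A t) + (Ap t * A t) * D := hQ.unique hQQ
  -- Dᵀ = D
  have hDT : Dᵀ = D := by
    have h3 := hQ.matrix_transpose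
    have he : (fun s => (Ap s * A s)ᵀ) = fun s => Ap s * A s := by
      funext s; exact (hMP s).2.2.2
    rw [he] at h3
    exact h3.unique hQ
  have hPt : P t = 1 - Ap t * A t := hP t
  have hPT : (P t)ᵀ = P t := by
    rw [hPt, transpose_sub, transpose_one, (hMP t).2.2.2]
  have hAPt : A t * P t = 0 := by
    rw [hPt, Matrix.mul_sub, Matrix.mul_one, ← Matrix.mul_assoc, (hMP t).1, sub_self]
  have hDP : D * P t = Ap t * A' t * P t := by
    rw [hD, add_mul, Matrix.mul_assoc Ap' (A t) (P t), hAPt, Matrix.mul_zero, zero_add]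
  have hPD : P t * D = (Ap t * A' t * P t)ᵀ := by
    rw [← hDP, transpose_mul, hDT, hPT]
  have h1 : D = D * P t + P t * D := by
    have hpa : Ap t * A t = 1 - P t := by rw [hPt]; simp
    have h := hDD
    rw [hpa, Matrix.mul_sub, Matrix.sub_mul, Matrix.mul_one, Matrix.one_mul] at h
    have h2 : D + D = D + (D * P t + P t * D) := by
      calc D + D = ((D - D * P t) + (D - P t * D)) + (D * P t + P t * D) := by abel
        _ = D + (D * P t + P t * D) := by rw [← h]
    exact add_left_cancel h2
  have hfin : HasDerivAt P (0 - D) t := by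
    rw [funext hP]
    exact (hasDerivAt_const t (1 : Matrix (Fin n) (Fin n) ℝ)).sub hQ
  convert hfin using 1
  rw [zero_sub, h1, hDP, hPD, transpose_neg, neg_add]
end

section
/- Let M be symmetric positive definite, P an orthogonal projection, ν > 0, and M̄ = P M P + ν(I - P). Then M̄⁻¹ commutes with P, i.e., P M̄⁻¹ = M̄⁻¹ P, and consequently P M P M̄⁻¹ P = P. -/
open Matrix

/-- M̄⁻¹ commutes with P, and consequently P M P M̄⁻¹ P = P. -/
theorem stmt10 {n : ℕ} (M P : Matrix (Fin n) (Fin n) ℝ)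
    (hM : M.PosDef) (hP2 : P * P = P) (hPT : Pᵀ = P) (ν : ℝ) (hν : 0 < ν)
    (Mbar : Matrix (Fin n) (Fin n) ℝ)
    (hMbar : Mbar = P * M * P + ν • ((1 : Matrix (Fin n) (Fin n) ℝ) - P)) :
    P * Mbar⁻¹ = Mbar⁻¹ * P ∧ P * M * P * Mbar⁻¹ * P = P := by
  have self_nn : ∀ v : Fin n → ℝ, 0 ≤ dotProduct v v := fun v => by
    simpa using dotProduct_self_star_nonneg v
  have self_pos : ∀ v : Fin n → ℝ, v ≠ 0 → 0 < dotProduct v v := fun v hv => by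
    have := dotProduct_self_star_pos_iff (v := v)
    simp only [star_trivial] at this
    exact this.mpr hv
  have hMH : Mᵀ = M := hM.1
  have hHerm : Mbar.IsHermitian := by
    rw [hMbar]
    simp only [IsHermitian, conjTranspose_add, conjTranspose_smul, conjTranspose_sub,
      conjTranspose_one, conjTranspose_mul]
    rw [show Pᴴ = P from hPT, show Mᴴ = M from hMH]
    rw [mul_assoc]
    simp
  have hQf : ∀ x : Fin n → ℝ, x ≠ 0 → 0 < dotProduct x (Mbar *ᵥ x) := by
    intro x hx
    have h1 : dotProduct x ((P * M * P) *ᵥ x) = dotProduct (P *ᵥ x) (M *ᵥ (P *ᵥ x)) := by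
      rw [← mulVec_mulVec, ← mulVec_mulVec, dotProduct_mulVec, ← hPT, vecMul_transpose, hPT]
    set Q : Matrix (Fin n) (Fin n) ℝ := (1 : Matrix (Fin n) (Fin n) ℝ) - P with hQdef
    have hQT : Qᵀ = Q := by rw [hQdef, transpose_sub, transpose_one, hPT]
    have hQ2 : Q * Q = Q := by
      rw [hQdef, mul_sub, sub_mul, sub_mul, mul_one, one_mul, hP2]; simp
    have h2 : dotProduct x (Q *ᵥ x) = dotProduct (Q *ᵥ x) (Q *ᵥ x) := by
      conv_lhs => rw [← hQ2, ← mulVec_mulVec, dotProduct_mulVec, ← hQT, vecMul_transpose, hQT]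
    have key : dotProduct x (Mbar *ᵥ x)
        = dotProduct (P *ᵥ x) (M *ᵥ (P *ᵥ x)) + ν * dotProduct (Q *ᵥ x) (Q *ᵥ x) := by
      rw [hMbar, add_mulVec, dotProduct_add, h1, smul_mulVec, dotProduct_smul,
        smul_eq_mul, h2]
    rw [key]
    by_cases hu0 : P *ᵥ x = 0
    · have hQx : Q *ᵥ x = x := by rw [hQdef, sub_mulVec, one_mulVec, hu0, sub_zero]
      rw [hu0, hQx]
      simp only [dotProduct_zero, mulVec_zero, zero_add]
      exact mul_pos hν (self_pos x hx)
    · have h1pos : 0 < dotProduct (P *ᵥ x) (M *ᵥ (P *ᵥ x)) := by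
        have := hM.dotProduct_mulVec_pos hu0
        simpa using this
      have h2nn : 0 ≤ ν * dotProduct (Q *ᵥ x) (Q *ᵥ x) :=
        mul_nonneg hν.le (self_nn _)
      linarith
  have hPD : Mbar.PosDef := PosDef.of_dotProduct_mulVec_pos hHerm (fun x hx => by simpa using hQf x hx)
  have hUnit : IsUnit Mbar.det := hPD.det_pos.ne'.isUnit
  have hinv1 : Mbar * Mbar⁻¹ = 1 := mul_nonsing_inv _ hUnit
  have hinv2 : Mbar⁻¹ * Mbar = 1 := nonsing_inv_mul _ hUnit
  have hc1 : P * Mbar = P * M * P := by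
    rw [hMbar, mul_add, mul_smul_comm, mul_sub, mul_one, ← mul_assoc, ← mul_assoc, hP2,
      sub_self, smul_zero, add_zero]
  have hc2 : Mbar * P = P * M * P := by
    rw [hMbar, add_mul, smul_mul_assoc, sub_mul, one_mul, mul_assoc, mul_assoc, hP2,
      sub_self, smul_zero, add_zero, ← mul_assoc]
  have hcomm : P * Mbar⁻¹ = Mbar⁻¹ * P := by
    calc P * Mbar⁻¹ = (Mbar⁻¹ * Mbar) * P * Mbar⁻¹ := by rw [hinv2, one_mul]
    _ = Mbar⁻¹ * (Mbar * P) * Mbar⁻¹ := by rw [mul_assoc Mbar⁻¹]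
    _ = Mbar⁻¹ * (P * Mbar) * Mbar⁻¹ := by rw [hc2, hc1]
    _ = Mbar⁻¹ * P * (Mbar * Mbar⁻¹) := by rw [mul_assoc, mul_assoc, mul_assoc]
    _ = Mbar⁻¹ * P := by rw [hinv1, mul_one]
  refine ⟨hcomm, ?_⟩
  calc P * M * P * Mbar⁻¹ * P = P * Mbar * Mbar⁻¹ * P := by rw [hc1]
  _ = P * (Mbar * Mbar⁻¹) * P := by rw [mul_assoc P]
  _ = P := by rw [hinv1, mul_one, hP2]
end

section
/- Let M be symmetric positive definite, P an orthogonal projection, ν > 0, M̄ = P M P + ν(I - P), and S = I - M M̄⁻¹ P. Then S is an oblique projection: S² = S. -/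
open Matrix

/-- S = I - M M̄⁻¹ P is an oblique projection: S² = S. -/
theorem stmt11 {n : ℕ} (M P : Matrix (Fin n) (Fin n) ℝ)
    (hM : M.PosDef) (hP2 : P * P = P) (hPT : Pᵀ = P) (ν : ℝ) (hν : 0 < ν)
    (Mbar S : Matrix (Fin n) (Fin n) ℝ)
    (hMbar : Mbar = P * M * P + ν • ((1 : Matrix (Fin n) (Fin n) ℝ) - P))
    (hS : S = 1 - M * Mbar⁻¹ * P) :
    S * S = S := by
  -- Mbar is symmetric (Hermitian over ℝ)
  have hHerm : Mbar.IsHermitian := by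
    have hMsym : Mᵀ = M := hM.isHermitian.eq
    rw [hMbar]
    unfold Matrix.IsHermitian
    rw [conjTranspose_add, conjTranspose_smul, conjTranspose_sub, conjTranspose_one]
    have h1 : (P * M * P)ᴴ = P * M * P := by
      rw [conjTranspose_mul, conjTranspose_mul]
      simp only [conjTranspose_eq_transpose_of_trivial, hPT, hMsym, Matrix.mul_assoc]
    have h2 : Pᴴ = P := by
      simp [conjTranspose_eq_transpose_of_trivial, hPT]
    rw [h1, h2]
    simp
  -- Mbar is positive definite
  have hPD : Mbar.PosDef := by
    refine Matrix.PosDef.of_dotProduct_mulVec_pos hHerm fun x hx => ?_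
    have hQ2 : (1 - P) * (1 - P) = 1 - P := by
      rw [Matrix.sub_mul, Matrix.mul_sub, Matrix.mul_sub, hP2]
      simp
    have h4 : x ᵥ* P = P *ᵥ x := by rw [← mulVec_transpose, hPT]
    have h5 : x ᵥ* (1 - P) = (1 - P) *ᵥ x := by
      rw [← mulVec_transpose, transpose_sub, transpose_one, hPT]
    have key : star x ⬝ᵥ (Mbar *ᵥ x) =
        star (P *ᵥ x) ⬝ᵥ (M *ᵥ (P *ᵥ x)) + ν * (star ((1 - P) *ᵥ x) ⬝ᵥ ((1 - P) *ᵥ x)) := by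
      rw [hMbar]
      rw [add_mulVec, smul_mulVec, dotProduct_add, dotProduct_smul]
      congr 1
      · rw [star_trivial, star_trivial]
        have h3 : (P * M * P) *ᵥ x = P *ᵥ (M *ᵥ (P *ᵥ x)) := by
          rw [mulVec_mulVec, mulVec_mulVec]
        rw [h3, dotProduct_mulVec x P (M *ᵥ (P *ᵥ x)), h4,
          dotProduct_mulVec (P *ᵥ x) M (P *ᵥ x)]
      · rw [smul_eq_mul]
        congr 1
        rw [star_trivial, star_trivial]
        conv_lhs => rw [← hQ2, ← mulVec_mulVec]
        rw [dotProduct_mulVec x (1 - P) ((1 - P) *ᵥ x), h5]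
    rw [key]
    by_cases hy : P *ᵥ x = 0
    · have hz : (1 - P) *ᵥ x = x := by rw [sub_mulVec, one_mulVec, hy, sub_zero]
      rw [hy, hz]
      simp only [mulVec_zero, dotProduct_zero, zero_add]
      have : (0:ℝ) < star x ⬝ᵥ ((1 : Matrix (Fin n) (Fin n) ℝ) *ᵥ x) :=
        Matrix.PosDef.one.dotProduct_mulVec_pos hx
      rw [one_mulVec] at this
      positivity
    · have h1 : (0:ℝ) < star (P *ᵥ x) ⬝ᵥ (M *ᵥ (P *ᵥ x)) := hM.dotProduct_mulVec_pos hy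
      have h2 : (0:ℝ) ≤ star ((1 - P) *ᵥ x) ⬝ᵥ ((1 - P) *ᵥ x) := by
        have := Matrix.PosSemidef.one (n := Fin n) (R := ℝ) |>.dotProduct_mulVec_nonneg ((1 - P) *ᵥ x)
        rwa [one_mulVec] at this
      nlinarith
  have hUd : IsUnit Mbar.det := (Matrix.isUnit_iff_isUnit_det _).mp hPD.isUnit
  have hinv1 : Mbar * Mbar⁻¹ = 1 := Matrix.mul_nonsing_inv _ hUd
  have hinv2 : Mbar⁻¹ * Mbar = 1 := Matrix.nonsing_inv_mul _ hUd
  -- Mbar commutes with P, hence so does its inverse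
  have hMbarP : Mbar * P = P * M * P := by
    rw [hMbar, Matrix.add_mul, Matrix.smul_mul, Matrix.sub_mul, Matrix.one_mul, hP2,
      sub_self, smul_zero, add_zero, Matrix.mul_assoc (P * M) P P, hP2]
  have hPMbar : P * Mbar = P * M * P := by
    rw [hMbar, Matrix.mul_add, Matrix.mul_smul, Matrix.mul_sub, Matrix.mul_one, hP2,
      sub_self, smul_zero, add_zero, ← Matrix.mul_assoc, ← Matrix.mul_assoc P P M, hP2]
  have hcomm : Mbar * P = P * Mbar := by rw [hMbarP, hPMbar]
  have hicomm : P * Mbar⁻¹ = Mbar⁻¹ * P := by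
    have h : Mbar⁻¹ * (Mbar * P) * Mbar⁻¹ = Mbar⁻¹ * (P * Mbar) * Mbar⁻¹ := by rw [hcomm]
    rw [← Matrix.mul_assoc Mbar⁻¹ Mbar P, hinv2, Matrix.one_mul,
      Matrix.mul_assoc Mbar⁻¹ (P * Mbar) Mbar⁻¹, Matrix.mul_assoc P Mbar Mbar⁻¹, hinv1,
      Matrix.mul_one] at h
    exact h
  have hQP' : Mbar⁻¹ * P = P * (Mbar⁻¹ * P) := by
    rw [← Matrix.mul_assoc, hicomm, Matrix.mul_assoc, hP2]
  have hPMP : P * M * P = Mbar - ν • ((1 : Matrix (Fin n) (Fin n) ℝ) - P) := by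
    rw [hMbar, add_sub_cancel_right]
  have hz : ((1 : Matrix (Fin n) (Fin n) ℝ) - P) * (Mbar⁻¹ * P) = 0 := by
    rw [Matrix.sub_mul, Matrix.one_mul, ← hQP', sub_self]
  have hkey : Mbar⁻¹ * (P * (M * (Mbar⁻¹ * P))) = Mbar⁻¹ * P := by
    calc Mbar⁻¹ * (P * (M * (Mbar⁻¹ * P)))
        = Mbar⁻¹ * (P * (M * (P * (Mbar⁻¹ * P)))) := by conv_lhs => rw [hQP']
      _ = Mbar⁻¹ * ((P * M * P) * (Mbar⁻¹ * P)) := by simp only [Matrix.mul_assoc]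
      _ = Mbar⁻¹ * ((Mbar - ν • ((1 : Matrix (Fin n) (Fin n) ℝ) - P)) * (Mbar⁻¹ * P)) := by
          rw [hPMP]
      _ = Mbar⁻¹ * (Mbar * (Mbar⁻¹ * P)) -
            ν • (Mbar⁻¹ * (((1 : Matrix (Fin n) (Fin n) ℝ) - P) * (Mbar⁻¹ * P))) := by
          rw [Matrix.sub_mul, Matrix.mul_sub, Matrix.smul_mul, Matrix.mul_smul]
      _ = Mbar⁻¹ * P := by
          rw [hz, Matrix.mul_zero, smul_zero, sub_zero, ← Matrix.mul_assoc Mbar Mbar⁻¹ P,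
            hinv1, Matrix.one_mul]
  have hAA : (M * Mbar⁻¹ * P) * (M * Mbar⁻¹ * P) = M * Mbar⁻¹ * P := by
    calc (M * Mbar⁻¹ * P) * (M * Mbar⁻¹ * P)
        = M * (Mbar⁻¹ * (P * (M * (Mbar⁻¹ * P)))) := by simp only [Matrix.mul_assoc]
      _ = M * (Mbar⁻¹ * P) := by rw [hkey]
      _ = M * Mbar⁻¹ * P := by rw [Matrix.mul_assoc]
  rw [hS, Matrix.sub_mul, Matrix.one_mul, Matrix.mul_sub, Matrix.mul_one, hAA]
  abel
end
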